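/- Every cotranslation Z : ℤ × ℤ → A_X arises from a unique map A : ℤ → A_X via A(n) = Z(n, 1); that is, the correspondence between maps A : ℤ → A_X and cotranslations Z : ℤ × ℤ → A_X given by products of the A(n) is bijective. -/

import Mathlib

/-- The ordered product `A(n + m - 1) ∘ ⋯ ∘ A(n)` of `m` factors. -/
noncomputable def prodA8 {X : Type*} [AddCommGroup X] [Module ℝ X]
    (A : ℤ → (X ≃ₗ[ℝ] X)) (n : ℤ) : ℕ → (X ≃ₗ[ℝ] X)
  | 0 => 1
  | (k + 1) => A (n + k) * prodA8 A n k

/-- The candidate cotranslation built from `A : ℤ → A_X` via the product formula. -/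
noncomputable def Zof8 {X : Type*} [AddCommGroup X] [Module ℝ X]
    (A : ℤ → (X ≃ₗ[ℝ] X)) (n m : ℤ) : (X ≃ₗ[ℝ] X) :=
  if 0 ≤ m then prodA8 A n m.toNat else (prodA8 A (n + m) (-m).toNat)⁻¹

/-- Every cotranslation `Z : ℤ × ℤ → A_X` arises, via the product formula,
from a unique map `A : ℤ → A_X`, namely `A n = Z n 1`. -/
theorem stmt_8 {X : Type*} [AddCommGroup X] [Module ℝ X]
    (Z : ℤ → ℤ → (X ≃ₗ[ℝ] X))
    (hZ : ∀ n m p : ℤ, Z n (p + m) = Z (m + n) p * Z n m) :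
    ∃! A : ℤ → (X ≃ₗ[ℝ] X), (∀ n : ℤ, A n = Z n 1) ∧ Z = Zof8 A := by
  have h0 : ∀ n : ℤ, Z n 0 = 1 := by
    intro n
    have h := hZ n 0 0
    simp only [add_zero, zero_add] at h
    exact mul_left_cancel (a := Z n 0) ((h.symm).trans (mul_one _).symm)
  have hpos : ∀ (k : ℕ) (n : ℤ), Z n k = prodA8 (fun n => Z n 1) n k := by
    intro k
    induction k with
    | zero => intro n; simpa [prodA8] using h0 n
    | succ k ih =>
      intro n
      have h := hZ n k 1
      have : ((k + 1 : ℕ) : ℤ) = 1 + (k : ℤ) := by push_cast; ring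
      rw [this, h, ih n]
      simp [prodA8, add_comm (k : ℤ) n]
  refine ⟨fun n => Z n 1, ⟨fun n => rfl, ?_⟩, ?_⟩
  · funext n m
    unfold Zof8
    split_ifs with hm
    · have : m = (m.toNat : ℤ) := (Int.toNat_of_nonneg hm).symm
      rw [this, hpos, Int.toNat_natCast]
    · push_neg at hm
      have hinv := hZ n m (-m)
      rw [neg_add_cancel, h0] at hinv
      have h1 : Z n m = (Z (m + n) (-m))⁻¹ :=
        eq_inv_of_mul_eq_one_right hinv.symm
      have h2 : (-m) = (((-m).toNat : ℕ) : ℤ) :=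
        (Int.toNat_of_nonneg (by omega)).symm
      rw [h1, add_comm n m]
      congr 1
      rw [h2, hpos, Int.toNat_natCast]
  · rintro A ⟨hA, -⟩
    funext n
    exact hA n
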